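/- If at least one of G and H is bipartite, then DOM(G □ H) ≥ DOM(G)·DOM(H). -/
import Mathlib


open SimpleGraph

variable {V : Type*}

/-- `D` is an orientation of the simple graph `G`: arcs only along edges, and each edge
gets exactly one of its two possible directions. -/
def IsOrientation (G : SimpleGraph V) (D : V → V → Prop) : Prop :=
  (∀ u v, D u v → G.Adj u v) ∧ (∀ u v, G.Adj u v → (D u v ↔ ¬ D v u))

/-- `S` is a dominating set of the digraph `D`. -/
def IsDomSet (D : V → V → Prop) (S : Finset V) : Prop :=
  ∀ v, v ∉ S → ∃ u ∈ S, D u v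

/-- Domination number of a digraph. -/
noncomputable def domNum (D : V → V → Prop) : ℕ :=
  sInf {n | ∃ S : Finset V, S.card = n ∧ IsDomSet D S}

/-- Orientable domination number of a graph. -/
noncomputable def DOM (G : SimpleGraph V) : ℕ :=
  sSup {n | ∃ D : V → V → Prop, IsOrientation G D ∧ domNum D = n}

/-- Independence number. -/
noncomputable def indepNum (G : SimpleGraph V) : ℕ :=
  sSup {n | ∃ S : Finset V, S.card = n ∧ ∀ u ∈ S, ∀ v ∈ S, ¬ G.Adj u v}

/-- Matching number. -/
noncomputable def matchNum (G : SimpleGraph V) : ℕ :=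
  sSup {n | ∃ M : Finset (Sym2 V), M.card = n ∧ (∀ e ∈ M, e ∈ G.edgeSet) ∧
    ∀ e ∈ M, ∀ f ∈ M, e ≠ f → ∀ v, v ∈ e → v ∉ f}

/-- Maximum order of a bipartite induced subgraph. -/
noncomputable def bipNum (G : SimpleGraph V) : ℕ :=
  sSup {n | ∃ s : Finset V, s.card = n ∧ (G.induce (s : Set V)).Colorable 2}

/-- Join of `G` with a single universal vertex (`none`). -/
def joinK1 (G : SimpleGraph V) : SimpleGraph (Option V) :=
  SimpleGraph.fromRel (fun a b => a = none ∨ ∃ u v, a = some u ∧ b = some v ∧ G.Adj u v)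

/-- Lexicographic product `G ∘ H`. -/
def lexProd {W : Type*} (G : SimpleGraph V) (H : SimpleGraph W) : SimpleGraph (V × W) :=
  SimpleGraph.fromRel (fun a b => G.Adj a.1 b.1 ∨ (a.1 = b.1 ∧ H.Adj a.2 b.2))

/-- Corona `G ⊙ H`: vertex `(u, none)` is the vertex `u` of `G`, the vertices `(u, some w)`
form the copy of `H` joined to `u`. -/
def corona {W : Type*} (G : SimpleGraph V) (H : SimpleGraph W) : SimpleGraph (V × Option W) :=
  SimpleGraph.fromRel (fun a b =>
    (a.2 = none ∧ b.2 = none ∧ G.Adj a.1 b.1) ∨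
    (a.1 = b.1 ∧ ∃ w w', a.2 = some w ∧ b.2 = some w' ∧ H.Adj w w') ∨
    (a.1 = b.1 ∧ a.2 = none ∧ b.2 ≠ none))

/-- A digraph is acyclic if it has no directed cycle. -/
def DigraphAcyclic (D : V → V → Prop) : Prop :=
  ¬ ∃ (m : ℕ) (c : ℕ → V), 0 < m ∧ (∀ i < m, D (c i) (c (i + 1))) ∧ c m = c 0

/-- A packing of a digraph: no arc joins two of its vertices and no vertex has two
out-neighbors in it. -/
def IsPacking (D : V → V → Prop) (P : Finset V) : Prop :=
  (∀ u ∈ P, ∀ v ∈ P, ¬ D u v) ∧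
  (∀ u ∈ P, ∀ v ∈ P, u ≠ v → ∀ w, ¬ (D w u ∧ D w v))

/-- Packing number of a digraph. -/
noncomputable def packNum (D : V → V → Prop) : ℕ :=
  sSup {n | ∃ P : Finset V, P.card = n ∧ IsPacking D P}

section OrientableDominationAux

open SimpleGraph

lemma exists_orientation {V : Type*} [Fintype V] (G : SimpleGraph V) :
    ∃ D : V → V → Prop, IsOrientation G D := by
  classical
  let e := Fintype.equivFin V
  refine ⟨fun u v => G.Adj u v ∧ e u < e v, fun u v h => h.1, fun u v h => ?_⟩
  have hne : e u ≠ e v := fun hh => G.ne_of_adj h (e.injective hh)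
  constructor
  · rintro ⟨-, hlt⟩ ⟨-, hlt'⟩
    exact absurd (lt_trans hlt hlt') (lt_irrefl _)
  · intro hn
    refine ⟨h, ?_⟩
    rcases lt_or_gt_of_ne hne with h1 | h1
    · exact h1
    · exact absurd ⟨h.symm, h1⟩ hn

lemma isDomSet_univ {V : Type*} [Fintype V] (D : V → V → Prop) :
    IsDomSet D (Finset.univ : Finset V) := fun v hv => absurd (Finset.mem_univ v) hv

lemma domNum_le {V : Type*} (D : V → V → Prop) {S : Finset V} (hS : IsDomSet D S) :
    domNum D ≤ S.card := Nat.sInf_le ⟨S, rfl, hS⟩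

lemma domNum_spec {V : Type*} [Fintype V] (D : V → V → Prop) :
    ∃ S : Finset V, S.card = domNum D ∧ IsDomSet D S := by
  have hne : {n | ∃ S : Finset V, S.card = n ∧ IsDomSet D S}.Nonempty :=
    ⟨Finset.univ.card, Finset.univ, rfl, isDomSet_univ D⟩
  exact Nat.sInf_mem hne

lemma DOM_bddAbove {V : Type*} [Fintype V] (G : SimpleGraph V) :
    BddAbove {n | ∃ D : V → V → Prop, IsOrientation G D ∧ domNum D = n} := by
  refine ⟨Fintype.card V, ?_⟩
  rintro n ⟨D, -, rfl⟩
  calc domNum D ≤ (Finset.univ : Finset V).card := domNum_le D (isDomSet_univ D)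
    _ = Fintype.card V := Finset.card_univ

lemma le_DOM {V : Type*} [Fintype V] {G : SimpleGraph V} {D : V → V → Prop}
    (hD : IsOrientation G D) : domNum D ≤ DOM G :=
  le_csSup (DOM_bddAbove G) ⟨D, hD, rfl⟩

lemma DOM_spec {V : Type*} [Fintype V] (G : SimpleGraph V) :
    ∃ D : V → V → Prop, IsOrientation G D ∧ domNum D = DOM G := by
  have hne : {n | ∃ D : V → V → Prop, IsOrientation G D ∧ domNum D = n}.Nonempty := by
    obtain ⟨D, hD⟩ := exists_orientation G
    exact ⟨domNum D, D, hD, rfl⟩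
  exact Nat.sSup_mem hne (DOM_bddAbove G)

/-- Every finite digraph whose arcs properly switch a 2-coloring has a kernel
(independent in-dominating set) inside any vertex set `A` (Richardson-type lemma). -/
lemma kernel_exists {V : Type*} (D : V → V → Prop)
    (c : V → Bool) (hc : ∀ u v, D u v → c u ≠ c v) :
    ∀ A : Finset V, ∃ S : Finset V, S ⊆ A ∧ (∀ u ∈ S, ∀ v ∈ S, ¬ D u v) ∧
      ∀ w ∈ A, w ∉ S → ∃ u ∈ S, D u w := by
  classical
  intro A
  induction A using Finset.strongInduction with
  | _ A ih =>
  rcases A.eq_empty_or_nonempty with rfl | hA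
  · exact ⟨∅, Finset.Subset.refl _, by simp, by simp⟩
  set r : V → V → Prop := fun a b => a ∈ A ∧ b ∈ A ∧ D a b with hr
  set reach : V → V → Prop := Relation.ReflTransGen r with hreach
  obtain ⟨v, hvA, hvmin⟩ := A.exists_min_image
    (fun v => (A.filter (fun u => reach u v)).card) hA
  have hmin : ∀ u ∈ A, reach u v → reach v u := by
    intro u huA huv
    by_contra hnv
    have hsub : A.filter (fun u' => reach u' u) ⊂ A.filter (fun u' => reach u' v) := by
      constructor
      · intro w hw
        rw [Finset.mem_filter] at hw ⊢
        exact ⟨hw.1, hw.2.trans huv⟩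
      · intro hcon
        have : v ∈ A.filter (fun u' => reach u' u) := hcon (by
          rw [Finset.mem_filter]; exact ⟨hvA, Relation.ReflTransGen.refl⟩)
        rw [Finset.mem_filter] at this
        exact hnv this.2
    have := Finset.card_lt_card hsub
    have := hvmin u huA
    omega
  set C : Finset V := A.filter (fun u => reach v u ∧ reach u v) with hC
  have hvC : v ∈ C := by
    rw [Finset.mem_filter]; exact ⟨hvA, Relation.ReflTransGen.refl, Relation.ReflTransGen.refl⟩
  have hinit : ∀ x y, r x y → y ∈ C → x ∈ C := by
    intro x y hxy hyC
    rw [Finset.mem_filter] at hyC ⊢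
    have hxv : reach x v := (Relation.ReflTransGen.single hxy).trans hyC.2.2
    exact ⟨hxy.1, hmin x hxy.1 hxv, hxv⟩
  set K : Finset V := C.filter (fun u => c u = c v) with hK
  have hKC : K ⊆ C := Finset.filter_subset _ _
  have hCA : C ⊆ A := Finset.filter_subset _ _
  have hCdom : ∀ w ∈ C, w ∉ K → ∃ u ∈ K, D u w := by
    intro w hwC hwK
    have hcw : c w ≠ c v := by
      intro h
      exact hwK (by rw [hK, Finset.mem_filter]; exact ⟨hwC, h⟩)
    have hwv : w ≠ v := fun h => hcw (by rw [h])
    have hvw : reach v w := by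
      rw [hC, Finset.mem_filter] at hwC
      exact hwC.2.1
    rcases Relation.ReflTransGen.cases_tail hvw with rfl | ⟨x, hvx, hxw⟩
    · exact absurd rfl hwv
    · have hxC : x ∈ C := hinit x w hxw hwC
      have hcx : c x ≠ c w := hc _ _ hxw.2.2
      have hcxv : c x = c v := by
        cases hx : c x <;> cases hw : c w <;> cases hv : c v <;> simp_all
      exact ⟨x, by rw [hK, Finset.mem_filter]; exact ⟨hxC, hcxv⟩, hxw.2.2⟩
  set A' : Finset V := A \ (C ∪ A.filter (fun w => ∃ u ∈ K, D u w)) with hA'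
  have hA'sub : A' ⊂ A := by
    refine Finset.ssubset_iff_of_subset (Finset.sdiff_subset) |>.mpr ?_
    exact ⟨v, hvA, by
      intro hcon
      exact (Finset.mem_sdiff.mp hcon).2 (Finset.mem_union_left _ hvC)⟩
  obtain ⟨S', hS'A, hS'ind, hS'dom⟩ := ih A' hA'sub
  have hS'A'' : ∀ x ∈ S', x ∈ A ∧ x ∉ C ∧ ¬ ∃ u ∈ K, D u x := by
    intro x hx
    have := hS'A hx
    rw [hA', Finset.mem_sdiff, Finset.mem_union] at this
    refine ⟨this.1, fun hc' => this.2 (Or.inl hc'), fun hc' => this.2 (Or.inr ?_)⟩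
    rw [Finset.mem_filter]; exact ⟨this.1, hc'⟩
  refine ⟨S' ∪ K, ?_, ?_, ?_⟩
  · intro x hx
    rcases Finset.mem_union.mp hx with h | h
    · exact (hA'sub.1 (hS'A h))
    · exact hCA (hKC h)
  · intro u hu w hw hD
    rcases Finset.mem_union.mp hu with hu' | hu' <;> rcases Finset.mem_union.mp hw with hw' | hw'
    · exact hS'ind u hu' w hw' hD
    · have huC : u ∈ C := hinit u w ⟨(hS'A'' u hu').1, hCA (hKC hw'), hD⟩ (hKC hw')
      exact (hS'A'' u hu').2.1 huC
    · exact (hS'A'' w hw').2.2 ⟨u, hu', hD⟩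
    · rw [hK, Finset.mem_filter] at hu' hw'
      exact hc u w hD (hu'.2.trans hw'.2.symm)
  · intro w hwA hwS
    have hwS' : w ∉ S' := fun h => hwS (Finset.mem_union_left _ h)
    have hwK : w ∉ K := fun h => hwS (Finset.mem_union_right _ h)
    by_cases hwA' : w ∈ A'
    · obtain ⟨u, hu, hDu⟩ := hS'dom w hwA' hwS'
      exact ⟨u, Finset.mem_union_left _ hu, hDu⟩
    · rw [hA', Finset.mem_sdiff] at hwA'
      push_neg at hwA'
      rcases Finset.mem_union.mp (hwA' hwA) with hwC | hwF
      · obtain ⟨u, hu, hDu⟩ := hCdom w hwC hwK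
        exact ⟨u, Finset.mem_union_right _ hu, hDu⟩
      · rw [Finset.mem_filter] at hwF
        obtain ⟨u, hu, hDu⟩ := hwF.2
        exact ⟨u, Finset.mem_union_right _ hu, hDu⟩

/-- Core construction: an independent set in `G` of size `k` forces
`k * DOM H ≤ DOM (G □ H)`. -/
lemma core_boxProd {V W : Type*} [Fintype V] [Fintype W]
    (G : SimpleGraph V) (H : SimpleGraph W)
    (I : Finset V) (hI : ∀ u ∈ I, ∀ v ∈ I, ¬ G.Adj u v) :
    I.card * DOM H ≤ DOM (G □ H) := by
  classical
  obtain ⟨D', hD', hD'num⟩ := DOM_spec H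
  obtain ⟨D₀, hD₀⟩ := exists_orientation G
  set E : V × W → V × W → Prop := fun a b =>
    (a.1 = b.1 ∧ D' a.2 b.2) ∨
    (a.2 = b.2 ∧ ((a.1 ∈ I ∧ G.Adj a.1 b.1) ∨ (a.1 ∉ I ∧ b.1 ∉ I ∧ D₀ a.1 b.1))) with hE
  have hEor : IsOrientation (G □ H) E := by
    constructor
    · rintro a b (⟨h1, h2⟩ | ⟨h1, (⟨-, h2⟩ | ⟨-, -, h2⟩)⟩)
      · exact (SimpleGraph.boxProd_adj).mpr (Or.inr ⟨hD'.1 _ _ h2, h1⟩)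
      · exact (SimpleGraph.boxProd_adj).mpr (Or.inl ⟨h2, h1⟩)
      · exact (SimpleGraph.boxProd_adj).mpr (Or.inl ⟨hD₀.1 _ _ h2, h1⟩)
    · intro a b hab
      rcases (SimpleGraph.boxProd_adj).mp hab with ⟨hadj, h2⟩ | ⟨hadj, h1⟩
      · -- G-edge: a.1 ≠ b.1, a.2 = b.2
        have hne : a.1 ≠ b.1 := G.ne_of_adj hadj
        have hEab : E a b ↔ ((a.1 ∈ I ∧ G.Adj a.1 b.1) ∨ (a.1 ∉ I ∧ b.1 ∉ I ∧ D₀ a.1 b.1)) := by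
          rw [hE]
          simp only [hne, false_and, false_or, h2, true_and]
        have hEba : E b a ↔ ((b.1 ∈ I ∧ G.Adj b.1 a.1) ∨ (b.1 ∉ I ∧ a.1 ∉ I ∧ D₀ b.1 a.1)) := by
          rw [hE]
          simp only [hne.symm, false_and, false_or, h2.symm, true_and]
        rw [hEab, hEba]
        by_cases haI : a.1 ∈ I <;> by_cases hbI : b.1 ∈ I
        · exact absurd hadj (hI _ haI _ hbI)
        · simp [haI, hbI, hadj, hadj.symm]
        · simp [haI, hbI, hadj, hadj.symm]
        · simp only [haI, hbI, not_false_iff, true_and, false_and, false_or, and_true]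
          have := hD₀.2 _ _ hadj
          tauto
      · -- H-edge: a.1 = b.1, a.2 ≠ b.2
        have hne : a.2 ≠ b.2 := H.ne_of_adj hadj
        have hEab : E a b ↔ D' a.2 b.2 := by
          rw [hE]; simp only [h1, true_and, hne, false_and, or_false]
        have hEba : E b a ↔ D' b.2 a.2 := by
          rw [hE]; simp only [h1.symm, true_and, hne.symm, false_and, or_false]
        rw [hEab, hEba]
        exact hD'.2 _ _ hadj
  -- lower bound for domNum E
  obtain ⟨S, hScard, hSdom⟩ := domNum_spec E
  have key : I.card * DOM H ≤ S.card := by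
    have hlayer : ∀ g ∈ I, DOM H ≤ (S.filter (fun p => p.1 = g)).card := by
      intro g hg
      set Sg : Finset W := (S.filter (fun p => p.1 = g)).image Prod.snd with hSg
      have hdomSg : IsDomSet D' Sg := by
        intro h hh
        have hgh : (g, h) ∉ S := by
          intro hmem
          exact hh (Finset.mem_image.mpr ⟨(g, h), Finset.mem_filter.mpr ⟨hmem, rfl⟩, rfl⟩)
        obtain ⟨u, huS, huE⟩ := hSdom (g, h) hgh
        rcases huE with ⟨h1, h2⟩ | ⟨h1, (⟨hu1, hadj⟩ | ⟨-, hgI, -⟩)⟩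
        · refine ⟨u.2, Finset.mem_image.mpr ⟨u, Finset.mem_filter.mpr ⟨huS, h1⟩, rfl⟩, h2⟩
        · exact absurd hadj (hI _ hu1 _ hg)
        · exact absurd hg hgI
      calc DOM H = domNum D' := hD'num.symm
        _ ≤ Sg.card := domNum_le D' hdomSg
        _ ≤ (S.filter (fun p => p.1 = g)).card := Finset.card_image_le
    have hdisj : ∀ g ∈ I, ∀ g' ∈ I, g ≠ g' →
        Disjoint (S.filter (fun p => p.1 = g)) (S.filter (fun p => p.1 = g')) := by
      intro g _ g' _ hne
      refine Finset.disjoint_left.mpr ?_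
      intro p hp hp'
      rw [Finset.mem_filter] at hp hp'
      exact hne (hp.2.symm.trans hp'.2)
    have hbi : (I.biUnion (fun g => S.filter (fun p => p.1 = g))).card =
        ∑ g ∈ I, (S.filter (fun p => p.1 = g)).card :=
      Finset.card_biUnion hdisj
    have hsub : I.biUnion (fun g => S.filter (fun p => p.1 = g)) ⊆ S := by
      intro p hp
      obtain ⟨g, -, hpg⟩ := Finset.mem_biUnion.mp hp
      exact (Finset.mem_filter.mp hpg).1
    calc I.card * DOM H = ∑ _g ∈ I, DOM H := by
          rw [Finset.sum_const, smul_eq_mul]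
      _ ≤ ∑ g ∈ I, (S.filter (fun p => p.1 = g)).card := Finset.sum_le_sum hlayer
      _ = (I.biUnion (fun g => S.filter (fun p => p.1 = g))).card := hbi.symm
      _ ≤ S.card := Finset.card_le_card hsub
  calc I.card * DOM H ≤ S.card := key
    _ = domNum E := hScard
    _ ≤ DOM (G □ H) := le_DOM hEor

end OrientableDominationAux

section OrientableDominationAux2

open SimpleGraph

lemma DOM_le_of_iso {V V' : Type*} [Fintype V] [Fintype V']
    {G : SimpleGraph V} {G' : SimpleGraph V'} (e : G ≃g G') : DOM G ≤ DOM G' := by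
  classical
  obtain ⟨D, hD, hDnum⟩ := DOM_spec G
  set D' : V' → V' → Prop := fun x y => D (e.symm x) (e.symm y) with hD'def
  have hor : IsOrientation G' D' := by
    constructor
    · intro u v h
      exact (e.symm.map_adj_iff).mp (hD.1 _ _ h)
    · intro u v h
      exact hD.2 _ _ ((e.symm.map_adj_iff).mpr h)
  have hle : domNum D ≤ domNum D' := by
    obtain ⟨S', hS'card, hS'dom⟩ := domNum_spec D'
    have hdom : IsDomSet D (S'.image e.symm) := by
      intro v hv
      have hev : e v ∉ S' := by
        intro h
        exact hv (Finset.mem_image.mpr ⟨e v, h, e.symm_apply_apply v⟩)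
      obtain ⟨u', hu', hDu'⟩ := hS'dom (e v) hev
      refine ⟨e.symm u', Finset.mem_image.mpr ⟨u', hu', rfl⟩, ?_⟩
      have : D (e.symm u') (e.symm (e v)) := hDu'
      rwa [e.symm_apply_apply] at this
    calc domNum D ≤ (S'.image e.symm).card := domNum_le D hdom
      _ ≤ S'.card := Finset.card_image_le
      _ = domNum D' := hS'card
  calc DOM G = domNum D := hDnum.symm
    _ ≤ domNum D' := hle
    _ ≤ DOM G' := le_DOM hor

lemma indep_ge_DOM_of_bipartite {V : Type*} [Fintype V] {G : SimpleGraph V}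
    (hG : G.Colorable 2) :
    ∃ S : Finset V, (∀ u ∈ S, ∀ v ∈ S, ¬ G.Adj u v) ∧ DOM G ≤ S.card := by
  classical
  obtain ⟨D, hD, hDnum⟩ := DOM_spec G
  obtain ⟨col⟩ := hG
  set c : V → Bool := fun v => decide (col v = 0) with hcdef
  have hcc : ∀ u v, D u v → c u ≠ c v := by
    intro u v h
    have hne : col u ≠ col v := col.valid (hD.1 _ _ h)
    have key : ∀ a b : Fin 2, a ≠ b → decide (a = 0) ≠ decide (b = 0) := by decide
    exact key _ _ hne
  obtain ⟨S, -, hSind, hSdom⟩ := kernel_exists D c hcc Finset.univ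
  have hSdom' : IsDomSet D S := fun v hv => hSdom v (Finset.mem_univ v) hv
  refine ⟨S, ?_, hDnum ▸ domNum_le D hSdom'⟩
  intro u hu v hv hadj
  by_cases h : D u v
  · exact hSind u hu v hv h
  · exact hSind v hv u hu ((hD.2 v u hadj.symm).mpr (fun hvu => h hvu))

end OrientableDominationAux2


theorem stmt12 {V W : Type*} [Fintype V] [Fintype W]
    (G : SimpleGraph V) (H : SimpleGraph W)
    (hbip : G.Colorable 2 ∨ H.Colorable 2) :
    DOM G * DOM H ≤ DOM (G □ H) := by
  classical
  rcases hbip with hG | hH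
  · obtain ⟨S, hSind, hScard⟩ := indep_ge_DOM_of_bipartite hG
    calc DOM G * DOM H ≤ S.card * DOM H := Nat.mul_le_mul_right _ hScard
      _ ≤ DOM (G □ H) := core_boxProd G H S hSind
  · obtain ⟨S, hSind, hScard⟩ := indep_ge_DOM_of_bipartite hH
    calc DOM G * DOM H ≤ DOM G * S.card := Nat.mul_le_mul_left _ hScard
      _ = S.card * DOM G := Nat.mul_comm _ _
      _ ≤ DOM (H □ G) := core_boxProd H G S hSind
      _ ≤ DOM (G □ H) := DOM_le_of_iso (SimpleGraph.boxProdComm H G)
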